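/- If r₀ ∈ (0,1) and h(r₀) = 0, then h is differentiable at r₀ with h′(r₀) = q(r₀)·A₁(r₀), where q(r) = 2(r³ − 3r² + 4r − 1)/(r(r−1)(r²+1)). -/

import Mathlib

open MeasureTheory Real Filter

/-- `u r z = √(z(1−rz)/(z+r))`, the real branch of `|w_r|` on `(0, 1/r)`. -/
noncomputable def u (r z : ℝ) : ℝ := Real.sqrt (z * (1 - r * z) / (z + r))

/-- The period function `h` of the candidate maximal Klein bottles. -/
noncomputable def h (r : ℝ) : ℝ :=
  ∫ z in (0:ℝ)..(1/r),
    -2 * u r z * (-1 + z + r * (2 - 3 * z + r * (-4 + 4 * r + 3 * z))) / (r + z)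

/-- `A₁ r = ∫₀^{1/r} u_r(z) dz`. -/
noncomputable def A₁ (r : ℝ) : ℝ := ∫ z in (0:ℝ)..(1/r), u r z

/-- `A₂ r = ∫₀^{1/r} u_r(z)/(z+r) dz`. -/
noncomputable def A₂ (r : ℝ) : ℝ := ∫ z in (0:ℝ)..(1/r), u r z / (z + r)

/-- The rational function `q` controlling the sign of `h'` at zeros of `h`. -/
noncomputable def q (r : ℝ) : ℝ :=
  2 * (r ^ 3 - 3 * r ^ 2 + 4 * r - 1) / (r * (r - 1) * (r ^ 2 + 1))

namespace Stmt13aux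

open Topology

/-- `W t = √(t(1-t))`. -/
noncomputable def W (t : ℝ) : ℝ := Real.sqrt (t * (1 - t))

/-- The family of auxiliary integrals `B n s = ∫₀¹ √(t(1-t)) (t+s)^{-(2n+1)/2} dt`,
obtained from the integrals over `(0,1/r)` by the substitution `z = t/r`, `s = r²`. -/
noncomputable def B (n : ℕ) (s : ℝ) : ℝ :=
  ∫ t in (0:ℝ)..1, W t * (t + s) ^ (-(2 * (n : ℝ) + 1) / 2)

lemma contW : Continuous W := Real.continuous_sqrt.comp (by continuity)

lemma W_nonneg (t : ℝ) : 0 ≤ W t := Real.sqrt_nonneg _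

lemma W_le_one (t : ℝ) : W t ≤ 1 := by
  have h := Real.sqrt_le_sqrt (show t * (1 - t) ≤ 1 by nlinarith [sq_nonneg (2*t - 1)])
  simpa [W] using h

lemma contOn_aux {s : ℝ} (hs : 0 < s) (p : ℝ) {U : Set ℝ} (hU : U ⊆ Set.Icc 0 1) :
    ContinuousOn (fun t : ℝ => W t * (t + s) ^ p) U := by
  refine contW.continuousOn.mul ?_
  intro t ht
  have h1 : (0:ℝ) ≤ t := (hU ht).1
  have h2 : 0 < t + s := by linarith
  exact (((continuousAt_id).add continuousAt_const).rpow_const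
    (Or.inl h2.ne')).continuousWithinAt

lemma intInt {s : ℝ} (hs : 0 < s) (p : ℝ) :
    IntervalIntegrable (fun t : ℝ => W t * (t + s) ^ p) volume 0 1 := by
  apply ContinuousOn.intervalIntegrable
  rw [Set.uIcc_of_le zero_le_one]
  exact contOn_aux hs p le_rfl

lemma aesm_aux {x : ℝ} (hx : 0 < x) (p : ℝ) :
    AEStronglyMeasurable (fun t : ℝ => W t * (t + x) ^ p)
      (volume.restrict (Set.uIoc (0:ℝ) 1)) := by
  rw [Set.uIoc_of_le zero_le_one]
  exact (contOn_aux hx p (Set.Ioc_subset_Icc_self)).aestronglyMeasurable measurableSet_Ioc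

/-- Differentiation under the integral sign: `B n' (s) = -(2n+1)/2 · B (n+1) s`. -/
lemma hasDerivAt_B (n : ℕ) {s : ℝ} (hs : 0 < s) :
    HasDerivAt (B n) ((-(2 * (n:ℝ) + 1) / 2) * B (n+1) s) s := by
  set p : ℝ := -(2 * (n:ℝ) + 1) / 2 with hp
  have hpneg : p ≤ 0 := by
    rw [hp]
    have : (0:ℝ) ≤ 2 * (n:ℝ) + 1 := by positivity
    linarith
  have hε : (0:ℝ) < s / 2 := by linarith
  have key := intervalIntegral.hasDerivAt_integral_of_dominated_loc_of_deriv_le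
    (μ := volume) (F := fun x t => W t * (t + x) ^ p)
    (F' := fun x t => W t * (p * (t + x) ^ (p - 1)))
    (x₀ := s) (a := 0) (b := 1) (bound := fun _ => |p| * (s/2) ^ (p-1)) (s := Metric.ball s (s/2)) (Metric.ball_mem_nhds _ hε)
    ?_ ?_ ?_ ?_ ?_ ?_
  · have h2 := key.2
    have hval : (∫ t in (0:ℝ)..1, W t * (p * (t + s) ^ (p - 1))) = p * B (n+1) s := by
      rw [B]
      rw [show -(2 * ((n+1:ℕ):ℝ) + 1) / 2 = p - 1 by push_cast; rw [hp]; ring]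
      rw [← intervalIntegral.integral_const_mul]
      exact intervalIntegral.integral_congr (fun t _ => by ring)
    rw [hval] at h2
    exact h2
  · filter_upwards [Ioi_mem_nhds hs] with x hx
    exact aesm_aux hx p
  · exact intInt hs p
  · rw [Set.uIoc_of_le zero_le_one]
    refine ContinuousOn.aestronglyMeasurable ?_ measurableSet_Ioc
    refine contW.continuousOn.mul (continuousOn_const.mul ?_)
    intro t ht
    have h2 : 0 < t + s := by have := ht.1; linarith
    exact (((continuousAt_id).add continuousAt_const).rpow_const
      (Or.inl h2.ne')).continuousWithinAt
  · refine Filter.Eventually.of_forall (fun t => ?_)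
    intro ht x hx
    rw [Set.uIoc_of_le zero_le_one] at ht
    have hxs : s / 2 < x := by
      rw [Metric.mem_ball, Real.dist_eq, abs_lt] at hx
      linarith [hx.1]
    have htx : s / 2 ≤ t + x := by have := ht.1; linarith
    have htx0 : 0 < t + x := lt_of_lt_of_le hε htx
    have hXnn : (0:ℝ) ≤ (t + x) ^ (p - 1) := Real.rpow_nonneg htx0.le _
    rw [Real.norm_eq_abs, abs_mul, abs_of_nonneg (W_nonneg t), abs_mul,
      abs_of_nonneg hXnn]
    calc W t * (|p| * (t + x) ^ (p - 1)) ≤ 1 * (|p| * (s/2) ^ (p-1)) := by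
          refine mul_le_mul (W_le_one t) ?_ (by positivity) zero_le_one
          exact mul_le_mul_of_nonneg_left
            (Real.rpow_le_rpow_of_nonpos hε htx (by linarith)) (abs_nonneg p)
      _ = |p| * (s/2) ^ (p-1) := one_mul _
  · exact intervalIntegrable_const
  · refine Filter.Eventually.of_forall (fun t => ?_)
    intro ht x hx
    rw [Set.uIoc_of_le zero_le_one] at ht
    have hxs : s / 2 < x := by
      rw [Metric.mem_ball, Real.dist_eq, abs_lt] at hx
      linarith [hx.1]
    have htx0 : 0 < t + x := by have := ht.1; linarith
    have h0 : HasDerivAt (fun y : ℝ => t + y) 1 x := (hasDerivAt_id x).const_add t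
    have h1 := (h0.rpow_const (p := p) (Or.inl htx0.ne')).const_mul (W t)
    simpa using h1

/-- The Picard–Fuchs type relation `B 2 s = B 0 s / (s(1+s))`, obtained by integrating
the exact form `d[(t(1-t))^{3/2} (t+s)^{-3/2}]` over `[0,1]`. -/
lemma B2_eq {s : ℝ} (hs : 0 < s) : B 2 s = B 0 s / (s * (1 + s)) := by
  set G' : ℝ → ℝ := fun t =>
    (1 - 2*t) * (3/2) * (t*(1-t)) ^ ((1:ℝ)/2) * (t+s) ^ (-(3:ℝ)/2)
      + (t*(1-t)) ^ ((3:ℝ)/2) * (-(3:ℝ)/2) * (t+s) ^ (-(5:ℝ)/2) with hG'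
  have contP : ∀ p : ℝ, ContinuousOn (fun t : ℝ => (t+s) ^ p) (Set.uIcc 0 1) := by
    intro p t ht
    rw [Set.uIcc_of_le zero_le_one] at ht
    have h2 : 0 < t + s := by have := ht.1; linarith
    exact (((continuousAt_id).add continuousAt_const).rpow_const
      (Or.inl h2.ne')).continuousWithinAt
  have contA : ∀ q : ℝ, 0 ≤ q → Continuous (fun t : ℝ => (t*(1-t)) ^ q) := by
    intro q hq
    exact Continuous.rpow_const (by continuity) (fun t => Or.inr hq)
  have hintG' : IntervalIntegrable G' volume 0 1 := by
    apply ContinuousOn.intervalIntegrable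
    rw [hG']
    apply ContinuousOn.add
    · exact (((by continuity : Continuous (fun t : ℝ => (1-2*t)*(3/2))).mul
        (contA _ (by norm_num))).continuousOn).mul (contP _)
    · exact (((contA _ (by norm_num)).mul continuous_const).continuousOn).mul (contP _)
  have hFTC : (∫ t in (0:ℝ)..1, G' t) = 0 := by
    have hderiv : ∀ t ∈ Set.uIcc (0:ℝ) 1,
        HasDerivAt (fun t : ℝ => (t*(1-t)) ^ ((3:ℝ)/2) * (t+s) ^ (-(3:ℝ)/2)) (G' t) t := by
      intro t ht
      rw [Set.uIcc_of_le zero_le_one] at ht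
      have hP : 0 < t + s := by have := ht.1; linarith
      have h1 : HasDerivAt (fun t : ℝ => t*(1-t)) (1*(1-t) + t*(-(1:ℝ))) t := by
        have := (hasDerivAt_id' t).mul ((hasDerivAt_const t (1:ℝ)).sub (hasDerivAt_id' t))
        convert this using 1 <;> first | rfl | (simp <;> ring)
      have h2 := h1.rpow_const (p := (3:ℝ)/2) (Or.inr (by norm_num))
      have h3 := ((hasDerivAt_id t).add_const s).rpow_const (p := -(3:ℝ)/2) (Or.inl hP.ne')
      have hg := h2.mul h3
      convert hg using 1
      all_goals try rfl
      rw [hG']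
      norm_num
      ring
    have := intervalIntegral.integral_eq_sub_of_hasDerivAt hderiv hintG'
    rw [this]
    norm_num [Real.zero_rpow]
  have hsplit : (∫ t in (0:ℝ)..1, G' t)
      = -(3/2) * B 0 s + (3/2*(s*(1+s))) * B 2 s := by
    have e0 : -(2 * ((0:ℕ) : ℝ) + 1) / 2 = -(1:ℝ)/2 := by norm_num
    have e2 : -(2 * ((2:ℕ) : ℝ) + 1) / 2 = -(5:ℝ)/2 := by norm_num
    rw [B, B, e0, e2, ← intervalIntegral.integral_const_mul,
      ← intervalIntegral.integral_const_mul,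
      ← intervalIntegral.integral_add
        (((intInt hs (-(1:ℝ)/2)).const_mul _))
        (((intInt hs (-(5:ℝ)/2)).const_mul _))]
    apply intervalIntegral.integral_congr
    intro t ht
    rw [Set.uIcc_of_le zero_le_one] at ht
    have hA : (0:ℝ) ≤ t * (1-t) := mul_nonneg ht.1 (by linarith [ht.2])
    have hP : 0 < t + s := by have := ht.1; linarith
    have hW : W t = (t*(1-t)) ^ ((1:ℝ)/2) := by
      rw [W, Real.sqrt_eq_rpow]
    have h32 : (t*(1-t)) ^ ((3:ℝ)/2) = (t*(1-t)) * (t*(1-t)) ^ ((1:ℝ)/2) := by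
      rw [show (3:ℝ)/2 = 1 + 1/2 by norm_num, Real.rpow_add' hA (by norm_num),
        Real.rpow_one]
    have hm32 : (t+s) ^ (-(3:ℝ)/2) = (t+s) * (t+s) ^ (-(5:ℝ)/2) := by
      rw [show -(3:ℝ)/2 = 1 + -(5/2:ℝ) by norm_num, Real.rpow_add hP, Real.rpow_one]
      norm_num
    have hm12 : (t+s) ^ (-(1:ℝ)/2) = (t+s)^(2:ℕ) * (t+s) ^ (-(5:ℝ)/2) := by
      rw [show -(1:ℝ)/2 = 2 + -(5/2:ℝ) by norm_num, Real.rpow_add hP,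
        show ((2:ℝ):ℝ) = ((2:ℕ):ℝ) by norm_num, Real.rpow_natCast]
      norm_num
    simp only [hG', hW, h32, hm32, hm12]
    generalize (t*(1-t)) ^ ((1:ℝ)/2) = X
    generalize (t+s) ^ (-(5:ℝ)/2) = Y
    ring
  rw [hsplit] at hFTC
  have hss : 0 < s * (1 + s) := by nlinarith
  field_simp
  nlinarith [hFTC]

/-- The substitution `z = t/r` for the square-root factor. -/
lemma u_sub {r t : ℝ} (hr : 0 < r) (ht0 : 0 ≤ t) (ht1 : t ≤ 1) :
    u r (t/r) = W t * (t + r^2) ^ (-(1:ℝ)/2) := by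
  have hpos : (0:ℝ) < t + r^2 := by positivity
  have h1 : 0 < t/r + r := by positivity
  have harg : (t/r) * (1 - r*(t/r)) / (t/r + r) = (t*(1-t))/(t+r^2) := by
    rw [div_eq_div_iff h1.ne' hpos.ne']
    field_simp [hr.ne']
  rw [u, harg, Real.sqrt_div (mul_nonneg ht0 (by linarith)), W, div_eq_mul_inv,
    Real.sqrt_eq_rpow (t+r^2), ← Real.rpow_neg hpos.le]
  norm_num

/-- `A₁` in terms of `B 0`. -/
lemma A₁_eq {r : ℝ} (hr : 0 < r) : A₁ r = r⁻¹ * B 0 (r^2) := by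
  have hcd := intervalIntegral.integral_comp_div (a := (0:ℝ)) (b := 1) (c := r)
    (f := u r) hr.ne'
  rw [zero_div] at hcd
  have hint : (∫ t in (0:ℝ)..1, u r (t/r)) = B 0 (r^2) := by
    rw [B]
    apply intervalIntegral.integral_congr
    intro t ht
    rw [Set.uIcc_of_le zero_le_one] at ht
    show u r (t/r) = W t * (t + r^2) ^ (-(2 * ((0:ℕ):ℝ) + 1) / 2)
    rw [u_sub hr ht.1 ht.2]
    norm_num
  have hkey : r * A₁ r = B 0 (r^2) := by
    rw [A₁, ← smul_eq_mul, ← hcd, hint]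
  rw [← hkey]
  field_simp

/-- The closed form of the period function in terms of `B 0` and `B 1`. -/
lemma h_eq {r : ℝ} (hr : 0 < r) :
    h r = r⁻¹ * ((-6*r^2+6*r-2) * B 0 (r^2)
      + (-2*r^4+2*r^3-2*r^2+2*r) * B 1 (r^2)) := by
  have hs : (0:ℝ) < r^2 := by positivity
  have hcd := intervalIntegral.integral_comp_div (a := (0:ℝ)) (b := 1) (c := r)
    (f := fun z => -2 * u r z * (-1 + z + r * (2 - 3 * z + r * (-4 + 4 * r + 3 * z))) / (r + z))
    hr.ne'
  rw [zero_div] at hcd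
  have hint : (∫ t in (0:ℝ)..1,
      -2 * u r (t/r) * (-1 + t/r + r * (2 - 3 * (t/r) + r * (-4 + 4 * r + 3 * (t/r)))) / (r + t/r))
      = (-6*r^2+6*r-2) * B 0 (r^2) + (-2*r^4+2*r^3-2*r^2+2*r) * B 1 (r^2) := by
    rw [B, B, ← intervalIntegral.integral_const_mul, ← intervalIntegral.integral_const_mul,
      ← intervalIntegral.integral_add
        ((intInt hs _).const_mul _) ((intInt hs _).const_mul _)]
    apply intervalIntegral.integral_congr
    intro t ht
    rw [Set.uIcc_of_le zero_le_one] at ht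
    show -2 * u r (t/r) * (-1 + t/r + r * (2 - 3 * (t/r) + r * (-4 + 4 * r + 3 * (t/r)))) / (r + t/r)
      = (-6*r^2+6*r-2) * (W t * (t + r^2) ^ (-(2 * ((0:ℕ):ℝ) + 1) / 2))
        + (-2*r^4+2*r^3-2*r^2+2*r) * (W t * (t + r^2) ^ (-(2 * ((1:ℕ):ℝ) + 1) / 2))
    have hpos : (0:ℝ) < t + r^2 := by have := ht.1; positivity
    have hden : (0:ℝ) < r + t/r := by have := ht.1; positivity
    have e0 : -(2 * ((0:ℕ):ℝ) + 1) / 2 = -(1:ℝ)/2 := by norm_num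
    have e1 : -(2 * ((1:ℕ):ℝ) + 1) / 2 = -(3:ℝ)/2 := by norm_num
    have h31 : (t + r^2) ^ (-(3:ℝ)/2) = (t + r^2)⁻¹ * (t + r^2) ^ (-(1:ℝ)/2) := by
      rw [show -(3:ℝ)/2 = -1 + -(1/2:ℝ) by norm_num, Real.rpow_add hpos,
        Real.rpow_neg_one]
      norm_num
    have hfrac : -2 * (-1 + t/r + r * (2 - 3 * (t/r) + r * (-4 + 4 * r + 3 * (t/r)))) / (r + t/r)
        = (-6*r^2+6*r-2) + (-2*r^4+2*r^3-2*r^2+2*r) * (t + r^2)⁻¹ := by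
      rw [div_eq_iff hden.ne']
      field_simp [hr.ne']
      ring
    rw [e0, e1, u_sub hr ht.1 ht.2, h31]
    have hX := hfrac
    rw [show ∀ A B C : ℝ, -2 * A * B / C = A * (-2 * B / C) from fun A B C => by ring, hfrac]
    ring
  have hkey : r * h r = (-6*r^2+6*r-2) * B 0 (r^2) + (-2*r^4+2*r^3-2*r^2+2*r) * B 1 (r^2) := by
    rw [h, ← smul_eq_mul, ← hcd, hint]
  rw [← hkey]
  field_simp

end Stmt13aux

theorem stmt_13 (r₀ : ℝ) (hr₀ : r₀ ∈ Set.Ioo (0:ℝ) 1) (hzero : h r₀ = 0) :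
    HasDerivAt h (q r₀ * A₁ r₀) r₀ := by
  obtain ⟨hr0, hr1⟩ := hr₀
  have hs₀ : (0:ℝ) < r₀^2 := by positivity
  have hx2 : HasDerivAt (fun r : ℝ => r^2) (2*r₀) r₀ := by
    simpa using hasDerivAt_pow 2 r₀
  have hx3 : HasDerivAt (fun r : ℝ => r^3) ((3:ℝ)*r₀^2) r₀ := by
    simpa using hasDerivAt_pow 3 r₀
  have hx4 : HasDerivAt (fun r : ℝ => r^4) ((4:ℝ)*r₀^3) r₀ := by
    simpa using hasDerivAt_pow 4 r₀
  have hB0 : HasDerivAt (fun r : ℝ => Stmt13aux.B 0 (r^2)) (-r₀ * Stmt13aux.B 1 (r₀^2)) r₀ := by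
    have hc := HasDerivAt.comp_of_eq r₀ (Stmt13aux.hasDerivAt_B 0 hs₀) hx2 rfl
    exact hc.congr_deriv (by push_cast; ring)
  have hB1 : HasDerivAt (fun r : ℝ => Stmt13aux.B 1 (r^2))
      (-3*r₀*(Stmt13aux.B 0 (r₀^2)/(r₀^2*(1+r₀^2)))) r₀ := by
    have hc := HasDerivAt.comp_of_eq r₀ (Stmt13aux.hasDerivAt_B 1 hs₀) hx2 rfl
    rw [show (1+1:ℕ) = 2 from rfl, Stmt13aux.B2_eq hs₀] at hc
    exact hc.congr_deriv (by push_cast; ring)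
  have hC1 : HasDerivAt (fun r : ℝ => -6*r^2+6*r-2) (-6*(2*r₀) + 6*1) r₀ :=
    ((hx2.const_mul (-6)).add ((hasDerivAt_id r₀).const_mul 6)).sub_const 2
  have hC2 : HasDerivAt (fun r : ℝ => -2*r^4+2*r^3-2*r^2+2*r)
      (-2*((4:ℝ)*r₀^3) + 2*((3:ℝ)*r₀^2) - 2*(2*r₀) + 2*1) r₀ :=
    (((hx4.const_mul (-2)).add (hx3.const_mul 2)).sub (hx2.const_mul 2)).add
      ((hasDerivAt_id r₀).const_mul 2)
  have hinv : HasDerivAt (fun r : ℝ => r⁻¹) (-(r₀^2)⁻¹) r₀ := hasDerivAt_inv hr0.ne'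
  have htotal := hinv.mul ((hC1.mul hB0).add (hC2.mul hB1))
  have hEv : h =ᶠ[nhds r₀] (fun r : ℝ => r⁻¹ * ((-6*r^2+6*r-2) * Stmt13aux.B 0 (r^2)
      + (-2*r^4+2*r^3-2*r^2+2*r) * Stmt13aux.B 1 (r^2))) := by
    filter_upwards [Ioi_mem_nhds hr0] with r hr using Stmt13aux.h_eq hr
  refine (htotal.congr_of_eventuallyEq hEv).congr_deriv ?_
  have hlin : (-6*r₀^2+6*r₀-2) * Stmt13aux.B 0 (r₀^2) + (-2*r₀^4+2*r₀^3-2*r₀^2+2*r₀) * Stmt13aux.B 1 (r₀^2) = 0 := by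
    have hz := hzero
    rw [Stmt13aux.h_eq hr0] at hz
    have hrne : r₀⁻¹ ≠ 0 := inv_ne_zero hr0.ne'
    exact (mul_eq_zero.mp hz).resolve_left hrne
  rw [Stmt13aux.A₁_eq hr0, q]
  have h1 : r₀ - 1 ≠ 0 := by linarith
  have h2 : r₀^2 + 1 ≠ 0 := by positivity
  have h3 : (1:ℝ) + r₀^2 ≠ 0 := by positivity
  simp only [Pi.mul_apply, Pi.add_apply]
  field_simp
  linear_combination (r₀^2*(1+r₀^2)) * hlin
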